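/- For real σ with 0 < σ < 1, ζ(σ) ≠ 0. -/

import Mathlib

open Complex

/-- The summand of our auxiliary series. -/
noncomputable def etaTerm (k : ℕ) (s : ℂ) : ℂ :=
    ((2 * k + 1 : ℝ) : ℂ) ^ (-s) - ((2 * k + 2 : ℝ) : ℂ) ^ (-s)

/-- The grouped alternating zeta function, absolutely convergent for `re s > 0`. -/
noncomputable def etaFun (s : ℂ) : ℂ := ∑' k : ℕ, etaTerm k s

lemma hasDerivAt_ofReal_cpow_const_of_pos {x : ℝ} (hx : 0 < x) {c : ℂ} (hc : c ≠ 0) :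
    HasDerivAt (fun y : ℝ => (y : ℂ) ^ c) (c * (x : ℂ) ^ (c - 1)) x := by
  have hr : c - 1 ≠ -1 := by
    intro h
    apply hc
    have := congrArg (· + 1) h
    simpa using this
  have h := hasDerivAt_ofReal_cpow_const' hx.ne' hr
  simp only [sub_add_cancel] at h
  have h2 := h.const_mul c
  have heq : (fun y : ℝ => c * ((y : ℂ) ^ c / c)) = fun y : ℝ => (y : ℂ) ^ c := by
    funext y; field_simp
  rwa [heq] at h2

lemma etaTerm_norm_le {k : ℕ} {s : ℂ} {δ R : ℝ} (hδ : 0 < δ) (hs : δ ≤ s.re)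
    (hR : ‖s‖ ≤ R) : ‖etaTerm k s‖ ≤ R * ((2 * k + 1 : ℝ)) ^ (-δ - 1) := by
  have hs0 : s ≠ 0 := by
    intro h; rw [h] at hs; simp at hs; linarith
  have hc : -s ≠ 0 := neg_ne_zero.mpr hs0
  set a : ℝ := 2 * k + 1 with ha
  have ha0 : (0 : ℝ) < a := by positivity
  have ha1 : (1 : ℝ) ≤ a := by
    have : (0:ℝ) ≤ 2 * k := by positivity
    simp only [ha]; linarith
  -- MVT on [a, a+1]
  have key : ∀ x ∈ Set.Icc a (a + 1),
      HasDerivWithinAt (fun y : ℝ => (y : ℂ) ^ (-s)) ((-s) * (x : ℂ) ^ (-s - 1))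
        (Set.Icc a (a + 1)) x := by
    intro x hx
    exact (hasDerivAt_ofReal_cpow_const_of_pos (lt_of_lt_of_le ha0 hx.1) hc).hasDerivWithinAt
  have bound : ∀ x ∈ Set.Icc a (a + 1),
      ‖(-s) * (x : ℂ) ^ (-s - 1)‖ ≤ R * a ^ (-δ - 1) := by
    intro x hx
    have hx0 : (0 : ℝ) < x := lt_of_lt_of_le ha0 hx.1
    rw [norm_mul, norm_neg]
    have h1 : ‖(x : ℂ) ^ (-s - 1)‖ = x ^ ((-s - 1).re) := by
      rw [Complex.norm_cpow_eq_rpow_re_of_pos hx0]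
    rw [h1]
    have h2 : x ^ ((-s - 1).re) ≤ a ^ (-δ - 1) := by
      have hre : (-s - 1).re = -s.re - 1 := by simp
      rw [hre]
      calc x ^ (-s.re - 1) ≤ a ^ (-s.re - 1) :=
            Real.rpow_le_rpow_of_nonpos ha0 hx.1 (by linarith)
          _ ≤ a ^ (-δ - 1) := Real.rpow_le_rpow_of_exponent_le ha1 (by linarith)
    calc ‖s‖ * x ^ ((-s - 1).re) ≤ R * x ^ ((-s - 1).re) := by
          apply mul_le_mul_of_nonneg_right hR (Real.rpow_nonneg hx0.le _)
      _ ≤ R * a ^ (-δ - 1) := by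
          apply mul_le_mul_of_nonneg_left h2 (le_trans (norm_nonneg s) hR)
  have mvt := Convex.norm_image_sub_le_of_norm_hasDerivWithin_le key bound
    (convex_Icc a (a + 1)) (Set.left_mem_Icc.mpr (by linarith))
    (Set.right_mem_Icc.mpr (by linarith))
  have : etaTerm k s = (fun y : ℝ => (y : ℂ) ^ (-s)) a - (fun y : ℝ => (y : ℂ) ^ (-s)) (a + 1) := by
    simp only [etaTerm, ha]
    ring_nf
  rw [this]
  rw [← norm_neg]
  simp only [neg_sub]
  calc ‖(fun y : ℝ => (y : ℂ) ^ (-s)) (a + 1) - (fun y : ℝ => (y : ℂ) ^ (-s)) a‖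
      ≤ R * a ^ (-δ - 1) * ‖(a + 1) - a‖ := mvt
    _ = R * a ^ (-δ - 1) := by simp

lemma summable_bound {δ : ℝ} (hδ : 0 < δ) (R : ℝ) :
    Summable (fun k : ℕ => R * ((2 * k + 1 : ℝ)) ^ (-δ - 1)) := by
  apply Summable.mul_left
  have hsum : Summable (fun k : ℕ => ((k : ℝ) + 1) ^ (-δ - 1)) := by
    have := Real.summable_nat_rpow (p := -δ - 1) |>.mpr (by linarith)
    exact_mod_cast (summable_nat_add_iff 1).mpr this
  apply hsum.of_nonneg_of_le (fun k => Real.rpow_nonneg (by positivity) _)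
  intro k
  apply Real.rpow_le_rpow_of_nonpos (by positivity) ?_ (by linarith)
  linarith [Nat.cast_nonneg (α := ℝ) k]

lemma etaTerm_differentiable (k : ℕ) : Differentiable ℂ (etaTerm k) := by
  have h1 : ((2 * (k:ℝ) + 1 : ℝ) : ℂ) ≠ 0 :=
    Complex.ofReal_ne_zero.mpr (by positivity)
  have h2 : ((2 * (k:ℝ) + 2 : ℝ) : ℂ) ≠ 0 :=
    Complex.ofReal_ne_zero.mpr (by positivity)
  exact (differentiable_neg.const_cpow (Or.inl h1)).sub
    (differentiable_neg.const_cpow (Or.inl h2))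

lemma etaFun_differentiableAt {s₀ : ℂ} (hs₀ : 0 < s₀.re) : DifferentiableAt ℂ etaFun s₀ := by
  set δ : ℝ := s₀.re / 2 with hδdef
  set R : ℝ := ‖s₀‖ + 1 with hRdef
  have hδ : 0 < δ := by positivity
  set U : Set ℂ := {s | δ < s.re ∧ ‖s‖ < R} with hU
  have hUopen : IsOpen U := by
    apply IsOpen.inter
    · exact isOpen_lt continuous_const Complex.continuous_re
    · exact isOpen_lt continuous_norm continuous_const
  have hmem : s₀ ∈ U := ⟨by simp [hδdef]; linarith, by simp [hRdef]⟩
  have hdiff : DifferentiableOn ℂ etaFun U := by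
    apply differentiableOn_tsum_of_summable_norm (summable_bound hδ R)
      (fun k => (etaTerm_differentiable k).differentiableOn) hUopen
    intro k w hw
    exact etaTerm_norm_le hδ hw.1.le hw.2.le
  exact hdiff.differentiableAt (hUopen.mem_nhds hmem)

lemma etaTerm_summable {s : ℂ} (hs : 0 < s.re) : Summable (fun k => etaTerm k s) := by
  apply Summable.of_norm
  apply (summable_bound hs ‖s‖).of_nonneg_of_le (fun k => norm_nonneg _)
  intro k
  exact etaTerm_norm_le hs le_rfl le_rfl

lemma etaFun_eq_zeta {s : ℂ} (hs : 1 < s.re) : etaFun s = (1 - 2 ^ (1 - s)) * riemannZeta s := by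
  set a : ℕ → ℂ := fun n => ((n + 1 : ℝ) : ℂ) ^ (-s) with ha
  have hsum : Summable a := by
    apply Summable.of_norm
    have : Summable (fun n : ℕ => ((n : ℝ) + 1) ^ (-s.re)) := by
      have := Real.summable_nat_rpow (p := -s.re) |>.mpr (by linarith)
      exact_mod_cast (summable_nat_add_iff 1).mpr this
    apply this.congr
    intro n
    rw [ha]
    rw [Complex.norm_cpow_eq_rpow_re_of_pos (by positivity)]
    norm_num
  have hzeta : riemannZeta s = ∑' n : ℕ, a n := by
    rw [zeta_eq_tsum_one_div_nat_add_one_cpow hs]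
    congr 1
    funext n
    simp only [ha]
    push_cast
    rw [Complex.cpow_neg, one_div]
  have heven : Summable (fun k => a (2 * k)) :=
    hsum.comp_injective (fun x y h => by omega)
  have hodd : Summable (fun k => a (2 * k + 1)) :=
    hsum.comp_injective (fun x y h => by omega)
  have hsplit : (∑' k, a (2 * k)) + ∑' k, a (2 * k + 1) = ∑' n, a n :=
    tsum_even_add_odd heven hodd
  have hterm : ∀ k : ℕ, etaTerm k s = a (2 * k) - a (2 * k + 1) := by
    intro k
    simp only [etaTerm, ha]
    push_cast
    ring_nf
  have hodd_eq : (∑' k, a (2 * k + 1)) = 2 ^ (-s) * ∑' n, a n := by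
    rw [← tsum_mul_left]
    congr 1
    funext k
    have h := mul_cpow_ofReal_nonneg (by norm_num : (0:ℝ) ≤ 2)
      (by positivity : (0:ℝ) ≤ (k:ℝ) + 1) (-s)
    simp only [ha]
    push_cast
    push_cast at h
    rw [show (2:ℂ) * (k:ℂ) + 1 + 1 = 2 * ((k:ℂ) + 1) by ring, h]
  have hF : etaFun s = (∑' k, a (2 * k)) - ∑' k, a (2 * k + 1) := by
    rw [etaFun]
    rw [tsum_congr hterm]
    exact Summable.tsum_sub heven hodd
  rw [hF, hzeta]
  have h2 : (2 : ℂ) ^ (1 - s) = 2 * 2 ^ (-s) := by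
    rw [show (1 : ℂ) - s = 1 + (-s) by ring, Complex.cpow_add _ _ (by norm_num), Complex.cpow_one]
  rw [h2]
  have : (∑' k, a (2 * k)) = (∑' n, a n) - ∑' k, a (2 * k + 1) := by
    rw [← hsplit]; ring
  rw [this, hodd_eq]
  ring

theorem stmt_5 (σ : ℝ) (h1 : 0 < σ) (h2 : σ < 1) :
    riemannZeta σ ≠ 0 := by
  set C₁ : Set ℂ := {s | 0 < s.re ∧ s.re < 1} with hC₁
  set C₂ : Set ℂ := {s | 0 < s.re ∧ 0 < s.im} with hC₂
  set C₃ : Set ℂ := {s | 1 < s.re} with hC₃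
  set U : Set ℂ := C₁ ∪ C₂ ∪ C₃ with hUdef
  have hUopen : IsOpen U := by
    apply IsOpen.union
    apply IsOpen.union
    · exact (isOpen_lt continuous_const Complex.continuous_re).inter
        (isOpen_lt Complex.continuous_re continuous_const)
    · exact (isOpen_lt continuous_const Complex.continuous_re).inter
        (isOpen_lt continuous_const Complex.continuous_im)
    · exact isOpen_lt continuous_const Complex.continuous_re
  have hpos : ∀ s ∈ U, 0 < s.re := by
    rintro s ((⟨hs, _⟩ | ⟨hs, _⟩) | hs)
    · exact hs
    · exact hs
    · exact lt_trans zero_lt_one hs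
  have hne1 : ∀ s ∈ U, s ≠ 1 := by
    rintro s ((⟨_, hs⟩ | ⟨_, hs⟩) | hs) rfl
    · rw [Complex.one_re] at hs; linarith
    · rw [Complex.one_im] at hs; linarith
    · simp only [hC₃, Set.mem_setOf_eq, Complex.one_re] at hs; linarith
  have hprecon : IsPreconnected U := by
    have hc₁ : IsPreconnected C₁ :=
      ((convex_halfSpace_re_gt 0).inter (convex_halfSpace_re_lt 1)).isPreconnected
    have hc₂ : IsPreconnected C₂ :=
      ((convex_halfSpace_re_gt 0).inter (convex_halfSpace_im_gt 0)).isPreconnected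
    have hc₃ : IsPreconnected C₃ := (convex_halfSpace_re_gt 1).isPreconnected
    have h12 : IsPreconnected (C₁ ∪ C₂) := by
      apply IsPreconnected.union (⟨1/2, 1/2⟩ : ℂ)
      · exact ⟨by norm_num, by norm_num⟩
      · exact ⟨by norm_num, by norm_num⟩
      · exact hc₁
      · exact hc₂
    apply IsPreconnected.union (⟨2, 1⟩ : ℂ)
    · exact Or.inr ⟨by norm_num, by norm_num⟩
    · exact (by norm_num : (1:ℝ) < 2)
    · exact h12
    · exact hc₃
  have hF : AnalyticOnNhd ℂ etaFun U := by
    apply DifferentiableOn.analyticOnNhd ?_ hUopen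
    exact fun s hs => (etaFun_differentiableAt (hpos s hs)).differentiableWithinAt
  set G : ℂ → ℂ := fun s => (1 - 2 ^ (1 - s)) * riemannZeta s with hG
  have hGdiff : ∀ s : ℂ, s ≠ 1 → DifferentiableAt ℂ G s := by
    intro s hs
    apply DifferentiableAt.mul
    · apply DifferentiableAt.sub (differentiableAt_const _)
      exact (differentiableAt_id.const_sub 1).const_cpow (Or.inl two_ne_zero)
    · exact differentiableAt_riemannZeta hs
  have hGa : AnalyticOnNhd ℂ G U := by
    apply DifferentiableOn.analyticOnNhd ?_ hUopen
    exact fun s hs => (hGdiff s (hne1 s hs)).differentiableWithinAt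
  have hmem2 : (⟨2, 1⟩ : ℂ) ∈ U := Or.inr (by norm_num : (1:ℝ) < 2)
  have hEq : etaFun =ᶠ[nhds (⟨2, 1⟩ : ℂ)] G := by
    have hopen : IsOpen {s : ℂ | 1 < s.re} := isOpen_lt continuous_const Complex.continuous_re
    filter_upwards [hopen.mem_nhds (by norm_num : (1:ℝ) < (⟨2,1⟩ : ℂ).re)] with s hs
    exact etaFun_eq_zeta hs
  have heqOn : Set.EqOn etaFun G U :=
    hF.eqOn_of_preconnected_of_eventuallyEq hGa hprecon hmem2 hEq
  have hσU : (σ : ℂ) ∈ U := Or.inl (Or.inl ⟨by simpa using h1, by simpa using h2⟩)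
  have heq := heqOn hσU
  -- positivity of etaFun σ
  set g : ℕ → ℝ := fun k => (2 * k + 1 : ℝ) ^ (-σ) - (2 * k + 2 : ℝ) ^ (-σ) with hg
  have hcast : ∀ k, etaTerm k (σ : ℂ) = ((g k : ℝ) : ℂ) := by
    intro k
    simp only [etaTerm, hg, Complex.ofReal_sub]
    rw [Complex.ofReal_cpow (by positivity : (0:ℝ) ≤ 2 * (k:ℝ) + 1) (-σ),
      Complex.ofReal_cpow (by positivity : (0:ℝ) ≤ 2 * (k:ℝ) + 2) (-σ)]
    push_cast
    ring_nf
  have hgsum : Summable g := by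
    have := etaTerm_summable (s := (σ : ℂ)) (by simpa using h1)
    rw [funext hcast] at this
    exact Complex.summable_ofReal.mp this
  have hgpos : ∀ k, 0 < g k := by
    intro k
    have : (2 * (k:ℝ) + 2 : ℝ) ^ (-σ) < (2 * (k:ℝ) + 1 : ℝ) ^ (-σ) :=
      Real.rpow_lt_rpow_of_neg (by positivity) (by linarith) (by linarith)
    simp only [hg]
    linarith
  have hsumpos : 0 < ∑' k, g k := Summable.tsum_pos hgsum (fun k => (hgpos k).le) 0 (hgpos 0)
  have hFσ : etaFun (σ : ℂ) = ((∑' k, g k : ℝ) : ℂ) := by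
    rw [etaFun, tsum_congr hcast, Complex.ofReal_tsum]
  intro hzero
  rw [hG] at heq
  simp only [hzero, mul_zero] at heq
  rw [hFσ] at heq
  exact hsumpos.ne' (by exact_mod_cast heq)
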